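/- The generalized continued fraction with b_0 = 0, a_1 = a_2 = 1, a_n = -(n-1)(2n-5) for n ≥ 3, and b_n = -(3n-2) for n ≥ 1 converges, and its value is -π/4. -/

import Mathlib

/-- Continuant numerators: `cfA a b 0 = A_{-1} = 1`, `cfA a b (n+1) = A_n`. -/
def cfA (a b : ℕ → ℝ) : ℕ → ℝ
  | 0 => 1
  | 1 => b 0
  | n + 2 => b (n + 1) * cfA a b (n + 1) + a (n + 1) * cfA a b n

/-- Continuant denominators: `cfB a b 0 = B_{-1} = 0`, `cfB a b (n+1) = B_n`. -/
def cfB (a b : ℕ → ℝ) : ℕ → ℝ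
  | 0 => 0
  | 1 => 1
  | n + 2 => b (n + 1) * cfB a b (n + 1) + a (n + 1) * cfB a b n

/-- N-th convergent of the generalized continued fraction b_0 + K(a_n/b_n). -/
noncomputable def cfConvergent (a b : ℕ → ℝ) (N : ℕ) : ℝ :=
  cfA a b (N + 1) / cfB a b (N + 1)

/-- Partial numerators of the Ramanujan Machine fraction for -π/4. -/
noncomputable def rmA : ℕ → ℝ := fun n => if n ≤ 2 then 1 else -((n:ℝ) - 1) * (2*(n:ℝ) - 5)

/-- Partial denominators of the Ramanujan Machine fraction for -π/4 (with b_0 = 0). -/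
noncomputable def rmB : ℕ → ℝ := fun n => if n = 0 then 0 else -(3*(n:ℝ) - 2)



open Real Filter intervalIntegral Nat

noncomputable def dd : ℕ → ℝ
  | 0 => 1
  | n + 1 => (2 * (n : ℝ) + 1) * dd n

lemma dd_pos (n : ℕ) : 0 < dd n := by
  induction n with
  | zero => norm_num [dd]
  | succ k ih =>
    have h : (0:ℝ) < 2 * (k:ℝ) + 1 := by positivity
    simpa [dd] using mul_pos h ih

lemma fact_le_dd (n : ℕ) : (n ! : ℝ) ≤ dd n := by
  induction n with
  | zero => simp [dd]
  | succ k ih =>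
    have h1 : ((k+1)! : ℝ) = ((k:ℝ)+1) * (k ! : ℝ) := by
      rw [Nat.factorial_succ]; push_cast; ring
    have h2 : ((k:ℝ)+1) ≤ 2*(k:ℝ)+1 := by linarith [Nat.cast_nonneg (α := ℝ) k]
    have h3 : (0:ℝ) ≤ (k ! : ℝ) := by positivity
    rw [h1, dd]
    have := dd_pos k
    have h4 : (1:ℝ) ≤ (k ! : ℝ) := by exact_mod_cast Nat.one_le_iff_ne_zero.mpr (Nat.factorial_ne_zero k)
    nlinarith

noncomputable def aa (k : ℕ) : ℝ := (k ! : ℝ) / dd (k+1)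

noncomputable def SS (N : ℕ) : ℝ := ∑ k ∈ Finset.range N, aa k

lemma aa_pos (k : ℕ) : 0 < aa k := by
  have := dd_pos (k+1)
  have : (0:ℝ) < (k ! : ℝ) := by positivity
  exact div_pos this (dd_pos (k+1))

lemma aa_le (k : ℕ) : aa k ≤ 1 / ((k:ℝ) + 1) := by
  have h1 : ((k+1)! : ℝ) ≤ dd (k+1) := fact_le_dd (k+1)
  have h2 : ((k+1)! : ℝ) = ((k:ℝ)+1) * (k ! : ℝ) := by
    rw [Nat.factorial_succ]; push_cast; ring
  have hd := dd_pos (k+1)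
  have hk : (0:ℝ) < (k:ℝ)+1 := by positivity
  rw [aa, div_le_div_iff₀ hd hk]
  nlinarith
open Real Filter intervalIntegral Nat in
lemma int_aa (k : ℕ) : (∫ x in (0:ℝ)..π, Real.sin x ^ (2*k+1)) = 2^(k+1) * aa k := by
  induction k with
  | zero =>
    simp only [Nat.mul_zero, Nat.zero_add, pow_one, integral_sin, Real.cos_zero, Real.cos_pi]
    norm_num [aa, dd]
  | succ m ih =>
    have h : 2*(m+1)+1 = (2*m+1)+2 := by ring
    rw [h, integral_sin_pow, Real.sin_zero, Real.sin_pi, ih]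
    have hd : dd (m+2) = (2*(m:ℝ)+3) * dd (m+1) := by
      simp only [dd]; push_cast; ring
    have hdpos := dd_pos (m+1)
    have haa : aa (m+1) = ((m:ℝ)+1) * aa m / (2*(m:ℝ)+3) := by
      rw [aa, aa, hd]
      rw [Nat.factorial_succ]
      push_cast
      field_simp
    rw [haa]
    push_cast
    have h3 : (2*(m:ℝ)+3) ≠ 0 := by positivity
    field_simp
    ring
open Real Filter intervalIntegral Nat

lemma geo_ptwise (N : ℕ) (x : ℝ) :
    ∑ k ∈ Finset.range N, Real.sin x ^ (2*k+1) / 2^(k+1)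
      = Real.sin x / (1 + Real.cos x ^ 2) * (1 - (Real.sin x ^ 2 / 2)^N) := by
  have hs : Real.sin x ^ 2 = 1 - Real.cos x ^ 2 := Real.sin_sq x
  have hc : (0:ℝ) < 1 + Real.cos x ^ 2 := by positivity
  have hr : Real.sin x ^ 2 / 2 - 1 = -((1 + Real.cos x ^ 2)/2) := by rw [hs]; ring
  have hrne : Real.sin x ^ 2 / 2 ≠ 1 := by
    intro h
    have : Real.sin x ^ 2 = 2 := by linarith [congrArg (· * 2) h]
    nlinarith [Real.sin_sq_le_one x]
  have step : ∀ k ∈ Finset.range N,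
      Real.sin x ^ (2*k+1) / 2^(k+1) = (Real.sin x / 2) * (Real.sin x ^ 2 / 2)^k := by
    intro k _
    rw [pow_add, pow_mul, pow_one, pow_succ]
    rw [div_pow]; ring
  rw [Finset.sum_congr rfl step, ← Finset.mul_sum, geom_sum_eq hrne, hr]
  generalize (Real.sin x ^ 2 / 2)^N = t
  have hne : (1 + Real.cos x ^ 2) ≠ 0 := ne_of_gt hc
  have key : (t - 1) / -((1 + Real.cos x ^ 2) / 2) = 2*(1-t)/(1+Real.cos x ^ 2) := by
    rw [div_neg, div_div_eq_mul_div, ← neg_div]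
    congr 1
    ring
  rw [key, mul_comm]
  ring

lemma cont_core : Continuous fun x : ℝ => Real.sin x / (1 + Real.cos x ^ 2) :=
  Real.continuous_sin.div (by continuity) (fun x => by positivity)

lemma int_half_pi : (∫ x in (0:ℝ)..π, Real.sin x / (1 + Real.cos x ^ 2)) = π/2 := by
  have hderiv : ∀ x ∈ Set.uIcc (0:ℝ) π,
      HasDerivAt (fun y => -Real.arctan (Real.cos y))
        (Real.sin x / (1 + Real.cos x ^ 2)) x := by
    intro x _
    have h1 : HasDerivAt (fun y => Real.arctan (Real.cos y))
        ((1 / (1 + Real.cos x ^ 2)) * (-Real.sin x)) x :=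
      (Real.hasDerivAt_arctan (Real.cos x)).comp x (Real.hasDerivAt_cos x)
    have h2 := h1.neg
    refine h2.congr_deriv ?_
    ring
  rw [integral_eq_sub_of_hasDerivAt hderiv (cont_core.intervalIntegrable 0 π)]
  simp [Real.cos_pi, Real.cos_zero, Real.arctan_one, Real.arctan_neg]
  ring

lemma SS_eq (N : ℕ) : SS N
    = ∫ x in (0:ℝ)..π, Real.sin x / (1 + Real.cos x ^ 2) * (1 - (Real.sin x ^ 2 / 2)^N) := by
  have hint : ∀ k ∈ Finset.range N,
      IntervalIntegrable (fun x => Real.sin x ^ (2*k+1) / 2^(k+1)) MeasureTheory.volume 0 π := by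
    intro k _
    exact ((Real.continuous_sin.pow _).div_const _).intervalIntegrable 0 π
  have h1 : SS N = ∫ x in (0:ℝ)..π, ∑ k ∈ Finset.range N, Real.sin x ^ (2*k+1) / 2^(k+1) := by
    rw [integral_finset_sum hint, SS]
    refine Finset.sum_congr rfl fun k _ => ?_
    rw [integral_div, int_aa]
    field_simp
  rw [h1]
  exact integral_congr (fun x _ => geo_ptwise N x)

lemma SS_tendsto : Tendsto SS atTop (nhds (π/2)) := by
  have key : ∀ N, π/2 - SS N
      = ∫ x in (0:ℝ)..π, Real.sin x / (1 + Real.cos x ^ 2) * (Real.sin x ^ 2 / 2)^N := by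
    intro N
    rw [SS_eq, ← int_half_pi, ← integral_sub (g := fun x => Real.sin x / (1 + Real.cos x ^ 2) * (1 - (Real.sin x ^ 2 / 2)^N)) (cont_core.intervalIntegrable 0 π)
      ((cont_core.mul (by continuity)).intervalIntegrable 0 π)]
    exact integral_congr fun x _ => by ring
  have hbound : ∀ N : ℕ, ‖π/2 - SS N‖ ≤ π * (1/2)^N := by
    intro N
    rw [key N]
    have h := intervalIntegral.norm_integral_le_of_norm_le_const (C := (1/2)^N)
      (a := (0:ℝ)) (b := π)
      (f := fun x => Real.sin x / (1 + Real.cos x ^ 2) * (Real.sin x ^ 2 / 2)^N) ?_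
    · calc ‖∫ x in (0:ℝ)..π, Real.sin x / (1 + Real.cos x ^ 2) * (Real.sin x ^ 2 / 2)^N‖
          ≤ (1/2)^N * |π - 0| := h
        _ = π * (1/2)^N := by rw [sub_zero, abs_of_pos Real.pi_pos]; ring
    · intro x _
      have hc : (1:ℝ) ≤ 1 + Real.cos x ^ 2 := by nlinarith [sq_nonneg (Real.cos x)]
      have hs1 : |Real.sin x| ≤ 1 := Real.abs_sin_le_one x
      have hfrac : |Real.sin x / (1 + Real.cos x ^ 2)| ≤ 1 := by
        rw [abs_div]
        rw [abs_of_pos (by positivity : (0:ℝ) < 1 + Real.cos x ^ 2)]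
        exact div_le_one_of_le₀ (le_trans hs1 hc) (by positivity)
      have hpow : |(Real.sin x ^ 2 / 2)^N| ≤ (1/2)^N := by
        rw [abs_pow]
        refine pow_le_pow_left₀ (abs_nonneg _) ?_ N
        rw [abs_of_nonneg (by positivity : (0:ℝ) ≤ Real.sin x ^ 2 / 2)]
        nlinarith [Real.sin_sq_le_one x]
      calc ‖Real.sin x / (1 + Real.cos x ^ 2) * (Real.sin x ^ 2 / 2)^N‖
          = |Real.sin x / (1 + Real.cos x ^ 2)| * |(Real.sin x ^ 2 / 2)^N| := abs_mul _ _
        _ ≤ 1 * (1/2)^N := mul_le_mul hfrac hpow (abs_nonneg _) zero_le_one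
        _ = (1/2)^N := one_mul _
  have hlim : Tendsto (fun N : ℕ => π/2 - SS N) atTop (nhds 0) := by
    refine squeeze_zero_norm hbound ?_
    have := tendsto_pow_atTop_nhds_zero_of_lt_one (by norm_num : (0:ℝ) ≤ 1/2)
      (by norm_num : (1/2:ℝ) < 1)
    simpa using this.const_mul π
  have : Tendsto (fun N : ℕ => π/2 - (π/2 - SS N)) atTop (nhds (π/2 - 0)) :=
    tendsto_const_nhds.sub hlim
  simpa using this
noncomputable def PP (N : ℕ) : ℝ :=
  dd N * (((N:ℝ)^2 + 3*N + 1) * (SS (N+2) - SS (N+1)/2) + aa (N+1) * (1 - (N:ℝ))/2)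

lemma SS_succ (m : ℕ) : SS (m+1) = SS m + aa m := Finset.sum_range_succ _ _

lemma dd_succ (m : ℕ) : dd (m+1) = (2*(m:ℝ)+1) * dd m := rfl

lemma aa_succ (m : ℕ) : aa (m+1) = ((m:ℝ)+1) * aa m / (2*(m:ℝ)+3) := by
  rw [aa, aa, dd_succ (m+1), Nat.factorial_succ]
  have h1 := dd_pos (m+1)
  push_cast
  field_simp
  ring

lemma rmA_eval (m : ℕ) : rmA (m+3) = -((m:ℝ)+2) * (2*(m:ℝ)+1) := by
  rw [rmA]
  rw [if_neg (by omega)]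
  push_cast
  ring

lemma rmB_eval (m : ℕ) : rmB (m+1) = -(3*(m:ℝ)+1) := by
  rw [rmB]
  rw [if_neg (by omega)]
  push_cast
  ring

lemma hB_closed (m : ℕ) :
    cfB rmA rmB (m+2) = (-1:ℝ)^(m+1) * ((m:ℝ)^2 + 3*m + 1) * dd m := by
  induction m using Nat.twoStepInduction with
  | zero =>
    show rmB 1 * cfB rmA rmB 1 + rmA 1 * cfB rmA rmB 0 = _
    rw [rmB_eval 0]
    norm_num [cfB, rmA, dd]
  | one =>
    show rmB 2 * cfB rmA rmB 2 + rmA 2 * cfB rmA rmB 1 = _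
    have h2 : cfB rmA rmB 2 = rmB 1 * cfB rmA rmB 1 + rmA 1 * cfB rmA rmB 0 := rfl
    rw [rmB_eval 1, h2, rmB_eval 0]
    norm_num [cfB, rmA, dd]
  | more n ih1 ih2 =>
    show rmB (n+3) * cfB rmA rmB (n+3) + rmA (n+3) * cfB rmA rmB (n+2) = _
    rw [ih1, ih2, rmA_eval n, rmB_eval (n+2)]
    have hd1 : dd (n+1) = (2*(n:ℝ)+1) * dd n := dd_succ n
    have hd2 : dd (n+2) = (2*(n:ℝ)+3) * dd (n+1) := by
      rw [dd_succ (n+1)]; push_cast; ring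
    rw [hd2, hd1]
    push_cast
    ring

lemma PP_rec (n : ℕ) :
    PP (n+2) = (3*(n:ℝ)+7) * PP (n+1) - ((n:ℝ)+2)*(2*(n:ℝ)+1) * PP n := by
  have h1 : (0:ℝ) < 2*(n:ℝ)+3 := by positivity
  have h2 : (0:ℝ) < 2*(n:ℝ)+5 := by positivity
  have h3 : (0:ℝ) < 2*(n:ℝ)+7 := by positivity
  have e1 : aa (n+2) = ((n:ℝ)+2) * aa (n+1) / (2*(n:ℝ)+5) := by
    rw [aa_succ (n+1)]; push_cast; ring_nf
  have e2 : aa (n+3) = ((n:ℝ)+3) * (((n:ℝ)+2) * aa (n+1) / (2*(n:ℝ)+5)) / (2*(n:ℝ)+7) := by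
    rw [aa_succ (n+2), e1]; push_cast; ring_nf
  have hS2 : SS (n+2) = SS (n+1) + aa (n+1) := SS_succ (n+1)
  have hS3 : SS (n+3) = SS (n+2) + aa (n+2) := SS_succ (n+2)
  have hS4 : SS (n+4) = SS (n+3) + aa (n+3) := SS_succ (n+3)
  have hd1 : dd (n+1) = (2*(n:ℝ)+1) * dd n := dd_succ n
  have hd2 : dd (n+2) = (2*(n:ℝ)+3) * dd (n+1) := by
    rw [dd_succ (n+1)]; push_cast; ring
  rw [PP, PP, PP]
  simp only [show n+2+2=n+4 from rfl, show n+2+1=n+3 from rfl, show n+1+2=n+3 from rfl,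
    show n+1+1=n+2 from rfl]
  rw [hS4, hS3, hS2, e2, e1, hd2, hd1]
  push_cast
  field_simp
  ring

lemma hA_closed (m : ℕ) : cfA rmA rmB (m+2) = (-1:ℝ)^m * PP m := by
  induction m using Nat.twoStepInduction with
  | zero =>
    show rmB 1 * cfA rmA rmB 1 + rmA 1 * cfA rmA rmB 0 = _
    rw [rmB_eval 0]
    have : cfA rmA rmB 1 = rmB 0 := rfl
    rw [this]
    have h0 : rmB 0 = 0 := by rw [rmB]; simp
    have hPP : PP 0 = 1 := by
      rw [PP]
      have : SS 2 = SS 1 + aa 1 := SS_succ 1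
      rw [this, show SS 1 = SS 0 + aa 0 from SS_succ 0]
      have haa0 : aa 0 = 1 := by norm_num [aa, dd]
      have haa1 : aa 1 = 1/3 := by
        rw [aa_succ 0, haa0]; norm_num
      rw [haa0, haa1]
      norm_num [SS, dd]
    rw [h0, hPP]
    norm_num [cfA, rmA]
  | one =>
    show rmB 2 * cfA rmA rmB 2 + rmA 2 * cfA rmA rmB 1 = _
    have h2 : cfA rmA rmB 2 = rmB 1 * cfA rmA rmB 1 + rmA 1 * cfA rmA rmB 0 := rfl
    have h1 : cfA rmA rmB 1 = rmB 0 := rfl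
    have h0 : rmB 0 = 0 := by rw [rmB]; simp
    have haa0 : aa 0 = 1 := by norm_num [aa, dd]
    have haa1 : aa 1 = 1/3 := by rw [aa_succ 0, haa0]; norm_num
    have haa2 : aa 2 = 2/15 := by rw [aa_succ 1, haa1]; norm_num
    have hPP : PP 1 = 4 := by
      rw [PP]
      rw [show SS 3 = SS 2 + aa 2 from SS_succ 2, show SS 2 = SS 1 + aa 1 from SS_succ 1,
        show SS 1 = SS 0 + aa 0 from SS_succ 0]
      rw [haa0, haa1, haa2]
      norm_num [SS, dd_succ, dd]
    rw [rmB_eval 1, h2, rmB_eval 0, h1, h0, hPP]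
    norm_num [cfA, rmA]
  | more n ih1 ih2 =>
    show rmB (n+3) * cfA rmA rmB (n+3) + rmA (n+3) * cfA rmA rmB (n+2) = _
    rw [ih1, ih2, rmA_eval n, rmB_eval (n+2), PP_rec n]
    push_cast
    ring
open Real Filter intervalIntegral Nat in
lemma conv_formula (m : ℕ) :
    cfConvergent rmA rmB (m+1)
      = SS (m+1)/2 - SS (m+2) - aa (m+1) * (1 - (m:ℝ)) / (2*((m:ℝ)^2+3*m+1)) := by
  rw [cfConvergent, hA_closed, hB_closed]
  have hq : (0:ℝ) < (m:ℝ)^2+3*m+1 := by positivity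
  have hd := dd_pos m
  have hsgn : ((-1:ℝ)^m) ≠ 0 := pow_ne_zero m (by norm_num)
  rw [PP, pow_succ]
  field_simp
  ring

open Real Filter intervalIntegral Nat in
theorem ramanujan_machine_pi_quarter :
    Filter.Tendsto (fun N : ℕ => cfConvergent rmA rmB N) Filter.atTop
      (nhds (-(Real.pi / 4))) := by
  rw [← Filter.tendsto_add_atTop_iff_nat 1]
  have h1 : Tendsto (fun m : ℕ => SS (m+1)/2) atTop (nhds (π/4)) := by
    have := (SS_tendsto.comp (tendsto_add_atTop_nat 1)).div_const 2
    convert this using 2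
    · rfl
    · ring
  have h2 : Tendsto (fun m : ℕ => SS (m+2)) atTop (nhds (π/2)) :=
    SS_tendsto.comp (tendsto_add_atTop_nat 2)
  have h3 : Tendsto (fun m : ℕ => aa (m+1) * (1-(m:ℝ)) / (2*((m:ℝ)^2+3*m+1)))
      atTop (nhds 0) := by
    refine squeeze_zero_norm (fun m => ?_) tendsto_one_div_add_atTop_nhds_zero_nat
    have hq : (0:ℝ) < (m:ℝ)^2+3*m+1 := by positivity
    have ha := aa_pos (m+1)
    have hle : aa (m+1) ≤ 1/((m:ℝ)+2) := by
      have h := aa_le (m+1); push_cast at h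
      rw [show ((m:ℝ)+1+1) = (m:ℝ)+2 by ring] at h; exact h
    have habs : |1 - (m:ℝ)| ≤ (m:ℝ)^2+3*m+1 := by
      rw [abs_le]
      constructor <;> nlinarith [sq_nonneg ((m:ℝ)), Nat.cast_nonneg (α := ℝ) m]
    rw [Real.norm_eq_abs, abs_div, abs_mul, abs_of_pos ha,
      abs_of_pos (by positivity : (0:ℝ) < 2*((m:ℝ)^2+3*m+1))]
    have hm2 : (0:ℝ) < (m:ℝ)+2 := by positivity
    have hm1 : (0:ℝ) < (m:ℝ)+1 := by positivity
    calc aa (m+1) * |1-(m:ℝ)| / (2*((m:ℝ)^2+3*m+1))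
        ≤ aa (m+1) * ((m:ℝ)^2+3*m+1) / (2*((m:ℝ)^2+3*m+1)) :=
          (div_le_div_iff_of_pos_right (by positivity)).mpr (mul_le_mul_of_nonneg_left habs ha.le)
      _ = aa (m+1) / 2 := by field_simp
      _ ≤ aa (m+1) := by linarith
      _ ≤ 1/((m:ℝ)+2) := hle
      _ ≤ 1/((m:ℝ)+1) := by
          apply one_div_le_one_div_of_le hm1
          linarith
  have hlim : Tendsto (fun m : ℕ =>
      SS (m+1)/2 - SS (m+2) - aa (m+1) * (1-(m:ℝ)) / (2*((m:ℝ)^2+3*m+1)))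
      atTop (nhds (-(π/4))) := by
    have := (h1.sub h2).sub h3
    convert this using 2
    ring
  exact hlim.congr (fun m => (conv_formula m).symm)
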